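/- Let (Ω₁, P₁) and (Ω₂, P₂) be two finite probability spaces (two environments) with random variables Ŷᵢ, Yᵢ : Ωᵢ → ℝ, and square loss. Then the change in risk under any label perturbation δ : ℝ → ℝ is equal across the two environments, i.e. E₁[∂_y l(Ŷ₁,Y₁)·δ(Y₁)] = E₂[∂_y l(Ŷ₂,Y₂)·δ(Y₂)] for all δ, if and only if for every label value v attained in both environments, E₁[Ŷ₁ | Y₁ = v] = E₂[Ŷ₂ | Y₂ = v], provided the two environments have the same label distribution (the same set of label values with the same probabilities). -/

import Mathlib

open Classical in
/-- MRI invariance for the square loss: assuming the two environments have the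
same label distribution, the change in risk under any label perturbation is
shared across the environments iff the label-conditioned feature expectation
`E_e[Ŷ | Y = v]` is conserved. -/
theorem mri_invariance_square_loss
    {Ω₁ Ω₂ : Type*} [Fintype Ω₁] [Fintype Ω₂]
    (P₁ : Ω₁ → ℝ) (P₂ : Ω₂ → ℝ)
    (hP₁pos : ∀ ω, 0 < P₁ ω) (hP₂pos : ∀ ω, 0 < P₂ ω)
    (hP₁sum : ∑ ω, P₁ ω = 1) (hP₂sum : ∑ ω, P₂ ω = 1)
    (Yhat₁ Y₁ : Ω₁ → ℝ) (Yhat₂ Y₂ : Ω₂ → ℝ)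
    (hlabel : ∀ v : ℝ, (∑ ω with Y₁ ω = v, P₁ ω) = (∑ ω with Y₂ ω = v, P₂ ω)) :
    (∀ δ : ℝ → ℝ,
        ∑ ω, P₁ ω * (Y₁ ω - Yhat₁ ω) * δ (Y₁ ω)
          = ∑ ω, P₂ ω * (Y₂ ω - Yhat₂ ω) * δ (Y₂ ω)) ↔
      (∀ v : ℝ, v ∈ Set.range Y₁ → v ∈ Set.range Y₂ →
        (∑ ω with Y₁ ω = v, P₁ ω * Yhat₁ ω) / (∑ ω with Y₁ ω = v, P₁ ω)
          = (∑ ω with Y₂ ω = v, P₂ ω * Yhat₂ ω) / (∑ ω with Y₂ ω = v, P₂ ω)) := by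
  classical
  have hm₁pos : ∀ v : ℝ, v ∈ Set.range Y₁ → 0 < ∑ ω with Y₁ ω = v, P₁ ω := by
    rintro v ⟨ω₀, rfl⟩
    exact Finset.sum_pos (fun ω _ => hP₁pos ω)
      ⟨ω₀, by simp⟩
  have hm₂pos : ∀ v : ℝ, v ∈ Set.range Y₂ → 0 < ∑ ω with Y₂ ω = v, P₂ ω := by
    rintro v ⟨ω₀, rfl⟩
    exact Finset.sum_pos (fun ω _ => hP₂pos ω)
      ⟨ω₀, by simp⟩
  -- equal ranges
  have hrange : ∀ v : ℝ, v ∈ Set.range Y₁ ↔ v ∈ Set.range Y₂ := by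
    intro v
    constructor
    · intro hv
      have h := (hlabel v) ▸ hm₁pos v hv
      by_contra hnot
      have : (Finset.univ.filter (fun ω => Y₂ ω = v)) = ∅ := by
        apply Finset.filter_eq_empty_iff.2
        intro ω _ hω
        exact hnot ⟨ω, hω⟩
      rw [this] at h; simp at h
    · intro hv
      have h := (hlabel v).symm ▸ hm₂pos v hv
      by_contra hnot
      have : (Finset.univ.filter (fun ω => Y₁ ω = v)) = ∅ := by
        apply Finset.filter_eq_empty_iff.2
        intro ω _ hω
        exact hnot ⟨ω, hω⟩
      rw [this] at h; simp at h
  -- key sum identity: the fiber sum of P*(Y-Ŷ)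
  have hfiber₁ : ∀ v : ℝ, (∑ ω with Y₁ ω = v, P₁ ω * (Y₁ ω - Yhat₁ ω))
      = v * (∑ ω with Y₁ ω = v, P₁ ω) - ∑ ω with Y₁ ω = v, P₁ ω * Yhat₁ ω := by
    intro v
    rw [Finset.mul_sum, ← Finset.sum_sub_distrib]
    apply Finset.sum_congr rfl
    intro ω hω
    have : Y₁ ω = v := (Finset.mem_filter.1 hω).2
    rw [this]; ring
  have hfiber₂ : ∀ v : ℝ, (∑ ω with Y₂ ω = v, P₂ ω * (Y₂ ω - Yhat₂ ω))
      = v * (∑ ω with Y₂ ω = v, P₂ ω) - ∑ ω with Y₂ ω = v, P₂ ω * Yhat₂ ω := by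
    intro v
    rw [Finset.mul_sum, ← Finset.sum_sub_distrib]
    apply Finset.sum_congr rfl
    intro ω hω
    have : Y₂ ω = v := (Finset.mem_filter.1 hω).2
    rw [this]; ring
  constructor
  · -- forward
    intro h v hv₁ hv₂
    have hδ := h (fun y => if y = v then 1 else 0)
    have L : ∑ ω, P₁ ω * (Y₁ ω - Yhat₁ ω) * (if Y₁ ω = v then (1:ℝ) else 0)
        = ∑ ω with Y₁ ω = v, P₁ ω * (Y₁ ω - Yhat₁ ω) := by
      rw [Finset.sum_filter]
      apply Finset.sum_congr rfl
      intro ω _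
      by_cases hω : Y₁ ω = v <;> simp [hω]
    have R : ∑ ω, P₂ ω * (Y₂ ω - Yhat₂ ω) * (if Y₂ ω = v then (1:ℝ) else 0)
        = ∑ ω with Y₂ ω = v, P₂ ω * (Y₂ ω - Yhat₂ ω) := by
      rw [Finset.sum_filter]
      apply Finset.sum_congr rfl
      intro ω _
      by_cases hω : Y₂ ω = v <;> simp [hω]
    rw [L, R, hfiber₁, hfiber₂, hlabel v] at hδ
    have hS : (∑ ω with Y₁ ω = v, P₁ ω * Yhat₁ ω)
        = ∑ ω with Y₂ ω = v, P₂ ω * Yhat₂ ω := by linarith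
    rw [hS, hlabel v]
  · -- backward
    intro h δ
    set t : Finset ℝ := Finset.image Y₁ Finset.univ with ht
    have hmaps₁ : ∀ ω : Ω₁, ω ∈ Finset.univ → Y₁ ω ∈ t := by
      intro ω _; exact Finset.mem_image_of_mem _ (Finset.mem_univ ω)
    have hmaps₂ : ∀ ω : Ω₂, ω ∈ Finset.univ → Y₂ ω ∈ t := by
      intro ω _
      have : Y₂ ω ∈ Set.range Y₁ := (hrange (Y₂ ω)).2 ⟨ω, rfl⟩
      obtain ⟨ω', hω'⟩ := this
      rw [ht]
      exact Finset.mem_image.2 ⟨ω', Finset.mem_univ ω', hω'⟩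
    rw [← Finset.sum_fiberwise_of_maps_to hmaps₁
        (fun ω => P₁ ω * (Y₁ ω - Yhat₁ ω) * δ (Y₁ ω)),
        ← Finset.sum_fiberwise_of_maps_to hmaps₂
        (fun ω => P₂ ω * (Y₂ ω - Yhat₂ ω) * δ (Y₂ ω))]
    apply Finset.sum_congr rfl
    intro v hv
    have hv₁ : v ∈ Set.range Y₁ := by
      rw [ht] at hv
      obtain ⟨ω, _, hω⟩ := Finset.mem_image.1 hv
      exact ⟨ω, hω⟩
    have hv₂ : v ∈ Set.range Y₂ := (hrange v).1 hv₁
    have e₁ : (∑ ω with Y₁ ω = v, P₁ ω * (Y₁ ω - Yhat₁ ω) * δ (Y₁ ω))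
        = δ v * (∑ ω with Y₁ ω = v, P₁ ω * (Y₁ ω - Yhat₁ ω)) := by
      rw [Finset.mul_sum]
      apply Finset.sum_congr rfl
      intro ω hω
      have : Y₁ ω = v := (Finset.mem_filter.1 hω).2
      rw [this]; ring
    have e₂ : (∑ ω with Y₂ ω = v, P₂ ω * (Y₂ ω - Yhat₂ ω) * δ (Y₂ ω))
        = δ v * (∑ ω with Y₂ ω = v, P₂ ω * (Y₂ ω - Yhat₂ ω)) := by
      rw [Finset.mul_sum]
      apply Finset.sum_congr rfl
      intro ω hω
      have : Y₂ ω = v := (Finset.mem_filter.1 hω).2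
      rw [this]; ring
    rw [e₁, e₂, hfiber₁, hfiber₂]
    have hm := hlabel v
    have hS : (∑ ω with Y₁ ω = v, P₁ ω * Yhat₁ ω)
        = ∑ ω with Y₂ ω = v, P₂ ω * Yhat₂ ω := by
      have hdiv := h v hv₁ hv₂
      have h₁ := hm₁pos v hv₁
      have h₂ := hm₂pos v hv₂
      field_simp at hdiv
      rw [hm] at hdiv
      exact mul_right_cancel₀ (ne_of_gt h₂) (hdiv.trans (mul_comm _ _))
    rw [hS, hm]
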